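/- arXiv:1011.0802 — 2 statements merged into one kernel-verified Lean document; each statement's English description precedes it below -/
import Mathlib

section
/- Let A be a Banach algebra whose second dual A** (with first Arens product) has the T-w*w property, and let T, S : A → A be continuous linear maps. If D : A → A* is a T-S-derivation, then its second adjoint D'' : A** → A*** is a T''-S''-derivation. -/
set_option maxHeartbeats 1000000

namespace NormedSpace

/-- The topological dual of a seminormed space `E` (the former Mathlib `NormedSpace.Dual`). -/
abbrev Dual (𝕜 : Type*) [NontriviallyNormedField 𝕜] (E : Type*) [SeminormedAddCommGroup E]
    [NormedSpace 𝕜 E] : Type _ := E →L[𝕜] 𝕜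

end NormedSpace

open Filter Topology ContinuousLinearMap NormedSpace

noncomputable section ArensSetup

/-- The adjoint (transpose) of a continuous linear map between normed spaces. -/
def adjCLM {E F : Type*} [SeminormedAddCommGroup E] [NormedSpace ℝ E]
    [SeminormedAddCommGroup F] [NormedSpace ℝ F] (T : E →L[ℝ] F) :
    Dual ℝ F →L[ℝ] Dual ℝ E :=
  (ContinuousLinearMap.compL ℝ E F ℝ).flip T

@[simp] theorem adjCLM_apply {E F : Type*} [SeminormedAddCommGroup E] [NormedSpace ℝ E]
    [SeminormedAddCommGroup F] [NormedSpace ℝ F] (T : E →L[ℝ] F) (g : Dual ℝ F) (x : E) :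
    adjCLM T g x = g (T x) := rfl

/-- One-step Arens-type adjoint of a bounded bilinear map:
`ext1 β g' e = g' ∘ (β e)`. -/
def ext1 {E F G : Type*} [SeminormedAddCommGroup E] [NormedSpace ℝ E]
    [SeminormedAddCommGroup F] [NormedSpace ℝ F] [SeminormedAddCommGroup G] [NormedSpace ℝ G]
    (β : E →L[ℝ] F →L[ℝ] G) : Dual ℝ G →L[ℝ] E →L[ℝ] Dual ℝ F :=
  ((ContinuousLinearMap.compL ℝ F G ℝ).flip.comp β).flip

@[simp] theorem ext1_apply {E F G : Type*} [SeminormedAddCommGroup E] [NormedSpace ℝ E]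
    [SeminormedAddCommGroup F] [NormedSpace ℝ F] [SeminormedAddCommGroup G] [NormedSpace ℝ G]
    (β : E →L[ℝ] F →L[ℝ] G) (g' : Dual ℝ G) (e : E) (f : F) :
    ext1 β g' e f = g' (β e f) := rfl

/-- Triple adjoint: the (first) Arens extension of a bounded bilinear map to the
second duals. -/
def ext3 {E F G : Type*} [SeminormedAddCommGroup E] [NormedSpace ℝ E]
    [SeminormedAddCommGroup F] [NormedSpace ℝ F] [SeminormedAddCommGroup G] [NormedSpace ℝ G]
    (β : E →L[ℝ] F →L[ℝ] G) :
    Dual ℝ (Dual ℝ E) →L[ℝ] Dual ℝ (Dual ℝ F) →L[ℝ] Dual ℝ (Dual ℝ G) :=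
  ext1 (ext1 (ext1 β))

variable (A : Type*) [NonUnitalNormedRing A] [NormedSpace ℝ A]
  [SMulCommClass ℝ A A] [IsScalarTower ℝ A A] [CompleteSpace A]

/-- The first (left) Arens product on `A**`: `⟨a''b'', a'⟩ = ⟨a'', b''a'⟩`. -/
def fArens : Dual ℝ (Dual ℝ A) →L[ℝ] Dual ℝ (Dual ℝ A) →L[ℝ] Dual ℝ (Dual ℝ A) :=
  ext3 (ContinuousLinearMap.mul ℝ A)

/-- The second (right) Arens product on `A**`: `⟨a''∘b'', a'⟩ = ⟨b'', a'∘a''⟩`. -/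
def sArens : Dual ℝ (Dual ℝ A) →L[ℝ] Dual ℝ (Dual ℝ A) →L[ℝ] Dual ℝ (Dual ℝ A) :=
  (ext3 (ContinuousLinearMap.mul ℝ A).flip).flip

/-- `A` is Arens regular when the two Arens products on `A**` coincide. -/
def ArensRegular : Prop := fArens A = sArens A

variable {A}

/-- Weak-star to weak continuity for a map from the dual of `E` into `F`. -/
def WStarToWCont {E F : Type*} [SeminormedAddCommGroup E] [NormedSpace ℝ E]
    [SeminormedAddCommGroup F] [NormedSpace ℝ F] (f : Dual ℝ E → F) : Prop :=
  Continuous fun x : WeakDual ℝ E => toWeakSpace ℝ F (f (WeakDual.toStrongDual x))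

variable (A)

/-- The second adjoint `T'' : A** → A**` of `T : A → A`. -/
def secondAdj (T : A →L[ℝ] A) : Dual ℝ (Dual ℝ A) →L[ℝ] Dual ℝ (Dual ℝ A) :=
  adjCLM (adjCLM T)

/-- Left action of `A` on `A*`: `⟨a·a', b⟩ = ⟨a', ba⟩`. -/
def dualLeft : A →L[ℝ] Dual ℝ A →L[ℝ] Dual ℝ A :=
  (ext1 (ContinuousLinearMap.mul ℝ A).flip).flip

/-- Right action of `A` on `A*`: `⟨a'·a, b⟩ = ⟨a', ab⟩`. -/
def dualRight : Dual ℝ A →L[ℝ] A →L[ℝ] Dual ℝ A :=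
  ext1 (ContinuousLinearMap.mul ℝ A)

/-- Left action of `A**` (first Arens product) on `A***`. -/
def dualLeft2 : Dual ℝ (Dual ℝ A) →L[ℝ] Dual ℝ (Dual ℝ (Dual ℝ A)) →L[ℝ]
    Dual ℝ (Dual ℝ (Dual ℝ A)) :=
  (ext1 (fArens A).flip).flip

/-- Right action of `A**` (first Arens product) on `A***`. -/
def dualRight2 : Dual ℝ (Dual ℝ (Dual ℝ A)) →L[ℝ] Dual ℝ (Dual ℝ A) →L[ℝ]
    Dual ℝ (Dual ℝ (Dual ℝ A)) :=
  ext1 (fArens A)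

end ArensSetup

section BimoduleSetup

set_option maxHeartbeats 1000000

open Filter Topology ContinuousLinearMap NormedSpace

/-- A Banach `A`-bimodule: bounded bilinear left and right actions satisfying the
usual compatibility axioms. -/
structure BanachBimodule (A X : Type*) [NonUnitalNormedRing A] [NormedSpace ℝ A]
    [SMulCommClass ℝ A A] [IsScalarTower ℝ A A]
    [NormedAddCommGroup X] [NormedSpace ℝ X] [CompleteSpace X] where
  l : A →L[ℝ] X →L[ℝ] X
  r : X →L[ℝ] A →L[ℝ] X
  l_mul : ∀ a b x, l (a * b) x = l a (l b x)
  r_mul : ∀ x a b, r (r x a) b = r x (a * b)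
  l_r : ∀ a x b, l a (r x b) = r (l a x) b

variable {A X : Type*} [NonUnitalNormedRing A] [NormedSpace ℝ A]
  [SMulCommClass ℝ A A] [IsScalarTower ℝ A A] [CompleteSpace A]
  [NormedAddCommGroup X] [NormedSpace ℝ X] [CompleteSpace X]

/-- Left action of `A` on `X*`: `⟨a·f, x⟩ = ⟨f, x·a⟩`. -/
noncomputable def modDualLeft (M : BanachBimodule A X) : A →L[ℝ] Dual ℝ X →L[ℝ] Dual ℝ X :=
  (ext1 M.r.flip).flip

/-- Right action of `A` on `X*`: `⟨f·a, x⟩ = ⟨f, a·x⟩`. -/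
noncomputable def modDualRight (M : BanachBimodule A X) : Dual ℝ X →L[ℝ] A →L[ℝ] Dual ℝ X :=
  ext1 M.l

/-- Left action of `A**` on `X**` (first Arens extension). -/
noncomputable def modL2 (M : BanachBimodule A X) :
    Dual ℝ (Dual ℝ A) →L[ℝ] Dual ℝ (Dual ℝ X) →L[ℝ] Dual ℝ (Dual ℝ X) :=
  ext3 M.l

/-- Right action of `A**` on `X**` (first Arens extension); `modR2 M x'' a'' = x''a''`. -/
noncomputable def modR2 (M : BanachBimodule A X) :
    Dual ℝ (Dual ℝ X) →L[ℝ] Dual ℝ (Dual ℝ A) →L[ℝ] Dual ℝ (Dual ℝ X) :=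
  ext3 M.r

/-- Left action of `A**` on `X***`: `⟨a''·x''', x''⟩ = ⟨x''', x''a''⟩`. -/
noncomputable def modL3 (M : BanachBimodule A X) :
    Dual ℝ (Dual ℝ A) →L[ℝ] Dual ℝ (Dual ℝ (Dual ℝ X)) →L[ℝ] Dual ℝ (Dual ℝ (Dual ℝ X)) :=
  (ext1 (modR2 M).flip).flip

/-- Right action of `A**` on `X***`: `⟨x'''·a'', x''⟩ = ⟨x''', a''x''⟩`. -/
noncomputable def modR3 (M : BanachBimodule A X) :
    Dual ℝ (Dual ℝ (Dual ℝ X)) →L[ℝ] Dual ℝ (Dual ℝ A) →L[ℝ] Dual ℝ (Dual ℝ (Dual ℝ X)) :=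
  ext1 (modL2 M)

end BimoduleSetup

section DerivationSetup

variable {B Y : Type*} [SeminormedAddCommGroup B] [NormedSpace ℝ B]
  [SeminormedAddCommGroup Y] [NormedSpace ℝ Y]

/-- `D` is a derivation with respect to the multiplication `m` and the module
actions `l`, `r`. -/
def IsDeriv (m : B →L[ℝ] B →L[ℝ] B) (l : B →L[ℝ] Y →L[ℝ] Y)
    (r : Y →L[ℝ] B →L[ℝ] Y) (D : B →L[ℝ] Y) : Prop :=
  ∀ a b, D (m a b) = l a (D b) + r (D a) b

/-- `D` is an inner derivation: `D a = a·y − y·a` for some fixed `y`. -/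
def IsInner (l : B →L[ℝ] Y →L[ℝ] Y) (r : Y →L[ℝ] B →L[ℝ] Y) (D : B →L[ℝ] Y) : Prop :=
  ∃ y, ∀ a, D a = l a y - r y a

/-- `D` is a `T-S`-derivation: `D(ab) = T(a)·D(b) + D(a)·S(b)`. -/
def IsTSDeriv (m : B →L[ℝ] B →L[ℝ] B) (l : B →L[ℝ] Y →L[ℝ] Y)
    (r : Y →L[ℝ] B →L[ℝ] Y) (T S : B →L[ℝ] B) (D : B →L[ℝ] Y) : Prop :=
  ∀ a b, D (m a b) = l (T a) (D b) + r (D a) (S b)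

/-- `D` is an inner `T-S`-derivation: `D a = T(a)·y − y·S(a)` for some fixed `y`. -/
def IsTSInner (l : B →L[ℝ] Y →L[ℝ] Y) (r : Y →L[ℝ] B →L[ℝ] Y)
    (T S : B →L[ℝ] B) (D : B →L[ℝ] Y) : Prop :=
  ∃ y, ∀ a, D a = l (T a) y - r y (S a)

end DerivationSetup



section AuxGoldstine

open Filter Topology ContinuousLinearMap NormedSpace

/-- Every continuous linear functional on a space with a weak topology induced by a bilinear
pairing is given by pairing against a fixed vector. -/
theorem weakBilin_dual_eval {E F : Type*} [AddCommGroup E] [Module ℝ E]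
    [AddCommGroup F] [Module ℝ F] (B : E →ₗ[ℝ] F →ₗ[ℝ] ℝ)
    (f : WeakBilin B →L[ℝ] ℝ) : ∃ y : F, ∀ x : E, f x = B x y := by
  have h1 : f ⁻¹' (Metric.ball (0:ℝ) 1) ∈ 𝓝 (0 : WeakBilin B) := by
    have h := f.continuous.tendsto (0 : WeakBilin B)
    rw [map_zero] at h
    exact h (Metric.ball_mem_nhds 0 one_pos)
  obtain ⟨U, hU, hUsub⟩ := ((LinearMap.hasBasis_weakBilin B).mem_iff).mp h1
  obtain ⟨s, r, hr, rfl⟩ := (SeminormFamily.basisSets_iff _).mp hU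
  have hker : ⨅ i : s, LinearMap.ker (B.flip (i : F)) ≤
      LinearMap.ker (f.toLinearMap : E →ₗ[ℝ] ℝ) := by
    intro x hx
    simp only [Submodule.mem_iInf, LinearMap.mem_ker, LinearMap.flip_apply] at hx
    change f x = 0
    by_contra hfx
    have hmem : ∀ c : ℝ, (c • x : WeakBilin B) ∈
        Seminorm.ball ((s.sup B.toSeminormFamily)) 0 r := by
      intro c
      rw [Seminorm.mem_ball_zero]
      refine Seminorm.finset_sup_apply_lt hr (fun i hi => ?_)
      have hzero : B x i = 0 := hx ⟨i, hi⟩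
      have : B.toSeminormFamily i (c • x) = ‖B (c • x) i‖ := rfl
      rw [this]
      simp [map_smul, hzero, hr]
    have habs : ∀ c : ℝ, |c * f x| < 1 := by
      intro c
      have h2 : dist (f (c • x : WeakBilin B)) 0 < 1 := hUsub (hmem c)
      rw [dist_zero_right] at h2
      erw [map_smul] at h2
      simpa [Real.norm_eq_abs, abs_mul] using h2
    have h3 := habs (2 / f x)
    rw [div_mul_cancel₀] at h3
    · norm_num at h3
    · exact hfx
  have hspan := mem_span_of_iInf_ker_le_ker (ι := s)
    (L := fun i : s => B.flip (i : F)) (K := (f.toLinearMap : E →ₗ[ℝ] ℝ)) hker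
  obtain ⟨c, hc⟩ := (Submodule.mem_span_range_iff_exists_fun ℝ).mp hspan
  refine ⟨∑ i : s, c i • (i : F), fun x => ?_⟩
  have h4 := congrArg (fun (L : E →ₗ[ℝ] ℝ) => L x) hc
  simp only [LinearMap.coe_sum, Finset.sum_apply, LinearMap.smul_apply,
    LinearMap.flip_apply, ContinuousLinearMap.coe_coe] at h4
  rw [map_sum]
  simp only [map_smul, smul_eq_mul]
  exact h4.symm

noncomputable instance weakDualLCS (E : Type*) [AddCommGroup E] [Module ℝ E]
    [TopologicalSpace E] : LocallyConvexSpace ℝ (WeakDual ℝ E) :=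
  WeakBilin.locallyConvexSpace (B := topDualPairing ℝ E)

/-- **Goldstine's theorem** (density version): the image of a normed space in its double
dual is weak-star dense. -/
theorem goldstine_denseRange (E : Type*) [NormedAddCommGroup E] [NormedSpace ℝ E] :
    DenseRange (fun x : E => StrongDual.toWeakDual (inclusionInDoubleDual ℝ E x)) := by
  classical
  set J : E → WeakDual ℝ (Dual ℝ E) := fun x => StrongDual.toWeakDual (inclusionInDoubleDual ℝ E x)
    with hJ
  intro x''
  by_contra hx
  have hsub : Convex ℝ (Set.range J) := by
    intro p hp q hq s t hs ht hst
    obtain ⟨a, rfl⟩ := hp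
    obtain ⟨b, rfl⟩ := hq
    refine ⟨s • a + t • b, ?_⟩
    show StrongDual.toWeakDual (inclusionInDoubleDual ℝ E (s • a + t • b)) = _
    rw [map_add, map_smul, map_smul, map_add, map_smul, map_smul]
  have hconv : Convex ℝ (closure (Set.range J)) := hsub.closure
  obtain ⟨f, u, hfu, hux⟩ := geometric_hahn_banach_closed_point hconv isClosed_closure hx
  have h0 : (0:ℝ) < u := by
    have hz : (0 : WeakDual ℝ (Dual ℝ E)) ∈ closure (Set.range J) := by
      refine subset_closure ⟨0, ?_⟩
      show StrongDual.toWeakDual (inclusionInDoubleDual ℝ E 0) = 0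
      rw [map_zero, map_zero]
    have := hfu 0 hz
    simpa using this
  have hvanish : ∀ a : E, f (J a) = 0 := by
    intro a
    by_contra h
    have hall : ∀ c : ℝ, c * f (J a) < u := by
      intro c
      have hmem : J (c • a) ∈ closure (Set.range J) := subset_closure ⟨c • a, rfl⟩
      have e1 : J (c • a) = c • J a := by
        show StrongDual.toWeakDual (inclusionInDoubleDual ℝ E (c • a)) = _
        rw [map_smul, map_smul]
      have := hfu _ hmem
      rw [e1, map_smul, smul_eq_mul] at this
      exact this
    have h1 := hall ((u+1) / f (J a))
    rw [div_mul_cancel₀] at h1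
    · linarith
    · exact h
  obtain ⟨y, hy⟩ := weakBilin_dual_eval (topDualPairing ℝ (Dual ℝ E))
    (show WeakBilin (topDualPairing ℝ (Dual ℝ E)) →L[ℝ] ℝ from f)
  have hy' : ∀ x : Dual ℝ (Dual ℝ E), f x = topDualPairing ℝ (Dual ℝ E) x y :=
    fun x => hy x
  have hy0 : y = 0 := by
    refine ContinuousLinearMap.ext fun a => ?_
    have h1 := hy' (J a)
    rw [hvanish a] at h1
    have h2 : topDualPairing ℝ (Dual ℝ E) (J a) y = y a := rfl
    rw [h2] at h1
    simpa using h1.symm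
  have hfx : f x'' = 0 := by
    rw [hy' x'', hy0]
    simp
  rw [hfx] at hux
  linarith

end AuxGoldstine

section Statements
set_option maxHeartbeats 1000000
open Filter Topology ContinuousLinearMap NormedSpace

variable {A : Type*} [NonUnitalNormedRing A] [NormedSpace ℝ A]
  [SMulCommClass ℝ A A] [IsScalarTower ℝ A A] [CompleteSpace A]


theorem secondAdj_inclusion (T : A →L[ℝ] A) (a : A) :
    secondAdj A T (inclusionInDoubleDual ℝ A a) = inclusionInDoubleDual ℝ A (T a) := by
  refine ContinuousLinearMap.ext fun a' => ?_
  rfl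

theorem core_eq (T S : A →L[ℝ] A) (D : A →L[ℝ] Dual ℝ A)
    (hD : IsTSDeriv (ContinuousLinearMap.mul ℝ A) (dualLeft A) (dualRight A) T S D)
    (x'' : Dual ℝ (Dual ℝ A)) (a b : A) :
    adjCLM D x'' (a * b) =
      adjCLM D (fArens A x'' (inclusionInDoubleDual ℝ A (T a))) b
        + adjCLM S (ext1 (ext1 (ContinuousLinearMap.mul ℝ A)) x'' (D a)) b := by
  have e1 : ext1 (ext1 (ContinuousLinearMap.mul ℝ A)) (inclusionInDoubleDual ℝ A (T a)) (D b)
      = dualLeft A (T a) (D b) := by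
    refine ContinuousLinearMap.ext fun e => ?_
    rfl
  have e2 : adjCLM D (fArens A x'' (inclusionInDoubleDual ℝ A (T a))) b
      = x'' (dualLeft A (T a) (D b)) := by
    show x'' (ext1 (ext1 (ContinuousLinearMap.mul ℝ A)) (inclusionInDoubleDual ℝ A (T a)) (D b))
      = _
    rw [e1]
  have e3 : adjCLM S (ext1 (ext1 (ContinuousLinearMap.mul ℝ A)) x'' (D a)) b
      = x'' (dualRight A (D a) (S b)) := rfl
  have e4 : adjCLM D x'' (a * b) = x'' (D (ContinuousLinearMap.mul ℝ A a b)) := rfl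
  rw [e2, e3, e4, hD a b, map_add]

theorem step1_eq (T S : A →L[ℝ] A) (D : A →L[ℝ] Dual ℝ A)
    (hD : IsTSDeriv (ContinuousLinearMap.mul ℝ A) (dualLeft A) (dualRight A) T S D)
    (b'' x'' : Dual ℝ (Dual ℝ A)) (a : A) :
    ext1 (ext1 (ContinuousLinearMap.mul ℝ A)) b'' (adjCLM D x'') a
      = b'' (adjCLM D (fArens A x'' (secondAdj A T (inclusionInDoubleDual ℝ A a))))
        + adjCLM D (fArens A (secondAdj A S b'') x'') a := by
  rw [secondAdj_inclusion T a]
  have key : ext1 (ContinuousLinearMap.mul ℝ A) (adjCLM D x'') a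
      = adjCLM D (fArens A x'' (inclusionInDoubleDual ℝ A (T a)))
        + adjCLM S (ext1 (ext1 (ContinuousLinearMap.mul ℝ A)) x'' (D a)) := by
    refine ContinuousLinearMap.ext fun b => ?_
    have h5 : ext1 (ContinuousLinearMap.mul ℝ A) (adjCLM D x'') a b
        = adjCLM D x'' (a * b) := rfl
    rw [h5, ContinuousLinearMap.add_apply]
    exact core_eq T S D hD x'' a b
  have l1 : ext1 (ext1 (ContinuousLinearMap.mul ℝ A)) b'' (adjCLM D x'') a
      = b'' (ext1 (ContinuousLinearMap.mul ℝ A) (adjCLM D x'') a) := rfl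
  have l2 : adjCLM D (fArens A (secondAdj A S b'') x'') a
      = b'' (adjCLM S (ext1 (ext1 (ContinuousLinearMap.mul ℝ A)) x'' (D a))) := rfl
  rw [l1, key, map_add, l2]

/-- If `A**` has the `T-w*w` property and `D : A → A*` is a `T-S`-derivation, then
`D'' : A** → A***` is a `T''-S''`-derivation. -/
theorem secondAdjoint_TSderivation (T S : A →L[ℝ] A)
    (hT : ∀ a'' : Dual ℝ (Dual ℝ A), WStarToWCont (fun b'' => fArens A a'' (secondAdj A T b'')))
    (D : A →L[ℝ] Dual ℝ A)
    (hD : IsTSDeriv (ContinuousLinearMap.mul ℝ A) (dualLeft A) (dualRight A) T S D) :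
    IsTSDeriv (fArens A) (dualLeft2 A) (dualRight2 A)
      (secondAdj A T) (secondAdj A S) (adjCLM (adjCLM D)) := by
  intro a'' b''
  refine ContinuousLinearMap.ext fun x'' => ?_
  rw [ContinuousLinearMap.add_apply]
  set c1 : Dual ℝ A := ext1 (ext1 (ContinuousLinearMap.mul ℝ A)) b'' (adjCLM D x'') with hc1
  set c2 : Dual ℝ A := adjCLM D (fArens A (secondAdj A S b'') x'') with hc2
  have hg : Continuous fun φ : WeakDual ℝ (Dual ℝ A) => (WeakDual.toStrongDual φ) c1 :=
    WeakDual.eval_continuous c1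
  have hh1 : Continuous fun φ : WeakDual ℝ (Dual ℝ A) =>
      b'' (adjCLM D (fArens A x'' (secondAdj A T (WeakDual.toStrongDual φ)))) := by
    have h1 := hT x''
    unfold WStarToWCont at h1
    have h2 : Continuous fun w : WeakSpace ℝ (Dual ℝ (Dual ℝ A)) =>
        (topDualPairing ℝ (Dual ℝ (Dual ℝ A))).flip w (b''.comp (adjCLM D)) :=
      WeakBilin.eval_continuous _ _
    exact h2.comp h1
  have hh : Continuous fun φ : WeakDual ℝ (Dual ℝ A) =>
      b'' (adjCLM D (fArens A x'' (secondAdj A T (WeakDual.toStrongDual φ))))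
        + (WeakDual.toStrongDual φ) c2 := hh1.add (WeakDual.eval_continuous c2)
  have hagree : (fun φ : WeakDual ℝ (Dual ℝ A) => (WeakDual.toStrongDual φ) c1)
      ∘ (fun x : A => StrongDual.toWeakDual (inclusionInDoubleDual ℝ A x))
      = (fun φ : WeakDual ℝ (Dual ℝ A) =>
          b'' (adjCLM D (fArens A x'' (secondAdj A T (WeakDual.toStrongDual φ))))
            + (WeakDual.toStrongDual φ) c2)
        ∘ (fun x : A => StrongDual.toWeakDual (inclusionInDoubleDual ℝ A x)) := by
    funext a
    exact step1_eq T S D hD b'' x'' a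
  have key := (goldstine_denseRange A).equalizer hg hh hagree
  exact congrFun key (StrongDual.toWeakDual a'')


end Statements
end

section
/- Let A be a Banach algebra such that A** has the I-w*w property, where I is the identity map on A. If A** (with first Arens product) is weakly amenable, then A is weakly amenable. -/
set_option maxHeartbeats 1000000

open Filter Topology ContinuousLinearMap NormedSpace

open Filter Topology ContinuousLinearMap NormedSpace

section Aux
variable {A : Type*} [NonUnitalNormedRing A] [NormedSpace ℝ A]

theorem aux_interp (x : Dual ℝ (Dual ℝ A)) (S : Finset (Dual ℝ A)) :
    ∃ a : A, ∀ a' ∈ S, a' a = x a' := by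
  classical
  set T : A →ₗ[ℝ] (S → ℝ) := LinearMap.pi (fun i => ((i : Dual ℝ A) : A →ₗ[ℝ] ℝ)) with hT
  have hv : (fun i : S => x i) ∈ LinearMap.range T := by
    by_contra hv
    rw [← Submodule.Quotient.mk_eq_zero, ← Module.forall_dual_apply_eq_zero_iff ℝ,
      not_forall] at hv
    obtain ⟨φ, hφ⟩ := hv
    set lam : (S → ℝ) →ₗ[ℝ] ℝ := φ ∘ₗ (LinearMap.range T).mkQ with hlam
    have hker : ∀ a : A, lam (T a) = 0 := by
      intro a
      have : T a ∈ LinearMap.range T := ⟨a, rfl⟩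
      simp [hlam, (Submodule.Quotient.mk_eq_zero _).2 this]
    have hsum : ∀ v : S → ℝ, lam v = ∑ i, v i * lam (Pi.single i 1) := by
      intro v
      rw [LinearMap.pi_apply_eq_sum_univ lam v]
      refine Finset.sum_congr rfl fun i _ => ?_
      have h1 : (fun j => if i = j then (1:ℝ) else 0) = Pi.single i 1 := by
        funext j; simp [Pi.single_apply, eq_comm]
      rw [smul_eq_mul, h1]
    have hzero : (∑ i : S, lam (Pi.single i 1) • (i : Dual ℝ A)) = 0 := by
      ext a
      have := hker a
      rw [hsum] at this
      simpa [mul_comm, hT] using this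
    have : x (∑ i : S, lam (Pi.single i 1) • (i : Dual ℝ A)) = lam (fun i : S => x i) := by
      rw [hsum]
      simp [mul_comm]
    rw [hzero] at this
    simp at this
    exact hφ this.symm
  obtain ⟨a, ha⟩ := hv
  refine ⟨a, fun a' ha' => ?_⟩
  have := congrFun ha ⟨a', ha'⟩
  simpa [hT] using this

theorem aux_denseRange_iota :
    DenseRange (fun a : A => StrongDual.toWeakDual (inclusionInDoubleDual ℝ A a)) := by
  intro m
  have hb : (𝓝 m).HasBasis ((topDualPairing ℝ (Dual ℝ A)).toSeminormFamily.basisSets)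
      (fun U => (fun y => m + y) '' U) := by
    have h0 := LinearMap.hasBasis_weakBilin (topDualPairing ℝ (Dual ℝ A))
    have hmap : Filter.map (fun y => m + y) (𝓝 (0 : WeakDual ℝ (Dual ℝ A))) = 𝓝 m := by
      simpa using map_add_left_nhds m (0 : WeakDual ℝ (Dual ℝ A))
    rw [← hmap]
    exact h0.map (fun y => m + y)
  rw [mem_closure_iff_nhds_basis hb]
  intro U hU
  obtain ⟨S, r, hr, rfl⟩ := (SeminormFamily.basisSets_iff _).mp hU
  obtain ⟨a, ha⟩ := aux_interp (WeakDual.toStrongDual m) S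
  refine ⟨StrongDual.toWeakDual (inclusionInDoubleDual ℝ A a), Set.mem_range_self a, ?_⟩
  refine (Set.mem_image _ _ _).2 ?_
  refine ⟨StrongDual.toWeakDual (inclusionInDoubleDual ℝ A a) - m, ?_, ?_⟩
  · refine (Seminorm.mem_ball_zero _).2 ?_
    refine Seminorm.finset_sup_apply_lt hr fun i hi => ?_
    show ‖i a - WeakDual.toStrongDual m i‖ < r
    rw [ha i hi]
    simpa using hr
  · show m + (StrongDual.toWeakDual (inclusionInDoubleDual ℝ A a) - m)
        = StrongDual.toWeakDual (inclusionInDoubleDual ℝ A a)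
    abel

end Aux

section Aux2
open Filter Topology ContinuousLinearMap NormedSpace
variable {A : Type*} [NonUnitalNormedRing A] [NormedSpace ℝ A]
  [SMulCommClass ℝ A A] [IsScalarTower ℝ A A] [CompleteSpace A]

theorem aux_arens_iota (a b : A) :
    fArens A (inclusionInDoubleDual ℝ A a) (inclusionInDoubleDual ℝ A b)
      = inclusionInDoubleDual ℝ A (a * b) := by
  ext a'; rfl

theorem aux_step1 (D : A →L[ℝ] Dual ℝ A)
    (hD : IsDeriv (ContinuousLinearMap.mul ℝ A) (dualLeft A) (dualRight A) D)
    (a : A) (n : Dual ℝ (Dual ℝ A)) :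
    adjCLM (adjCLM D) (fArens A (inclusionInDoubleDual ℝ A a) n)
      = dualLeft2 A (inclusionInDoubleDual ℝ A a) (adjCLM (adjCLM D) n)
        + dualRight2 A (adjCLM (adjCLM D) (inclusionInDoubleDual ℝ A a)) n := by
  ext x''
  show n (ext1 (ContinuousLinearMap.mul ℝ A) (adjCLM D x'') a)
      = n (adjCLM D (fArens A x'' (inclusionInDoubleDual ℝ A a)))
        + n (ext1 (ext1 (ContinuousLinearMap.mul ℝ A)) x'' (D a))
  rw [← map_add]
  congr 1
  ext b
  have e2 : ext1 (ext1 (ContinuousLinearMap.mul ℝ A)) (inclusionInDoubleDual ℝ A a) (D b)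
      = dualLeft A a (D b) := by ext c; rfl
  show x'' (D (a * b))
      = x'' (ext1 (ext1 (ContinuousLinearMap.mul ℝ A)) (inclusionInDoubleDual ℝ A a) (D b))
        + x'' (ext1 (ContinuousLinearMap.mul ℝ A) (D a) b)
  rw [e2]
  have e3 : ext1 (ContinuousLinearMap.mul ℝ A) (D a) b = dualRight A (D a) b := rfl
  rw [e3, ← map_add, ← hD a b]
  rfl
end Aux2

section Main
open Filter Topology ContinuousLinearMap NormedSpace
variable {A : Type*} [NonUnitalNormedRing A] [NormedSpace ℝ A]
  [SMulCommClass ℝ A A] [IsScalarTower ℝ A A] [CompleteSpace A]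

theorem aux_main
    (hw : ∀ a'' : Dual ℝ (Dual ℝ A), WStarToWCont (fun b'' => fArens A a'' b''))
    (hAm : ∀ G : Dual ℝ (Dual ℝ A) →L[ℝ] Dual ℝ (Dual ℝ (Dual ℝ A)),
      IsDeriv (fArens A) (dualLeft2 A) (dualRight2 A) G →
      IsInner (dualLeft2 A) (dualRight2 A) G) :
    ∀ D : A →L[ℝ] Dual ℝ A,
      IsDeriv (ContinuousLinearMap.mul ℝ A) (dualLeft A) (dualRight A) D →
      IsInner (dualLeft A) (dualRight A) D := by
  intro D hD
  set G : Dual ℝ (Dual ℝ A) →L[ℝ] Dual ℝ (Dual ℝ (Dual ℝ A)) := adjCLM (adjCLM D) with hG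
  have step2 : IsDeriv (fArens A) (dualLeft2 A) (dualRight2 A) G := by
    intro m n
    ext x''
    have key : (fun q : WeakDual ℝ (Dual ℝ A) =>
          G (fArens A (WeakDual.toStrongDual q) n) x'')
        = fun q : WeakDual ℝ (Dual ℝ A) =>
            dualLeft2 A (WeakDual.toStrongDual q) (G n) x''
              + dualRight2 A (G (WeakDual.toStrongDual q)) n x'' := by
      refine Continuous.ext_on aux_denseRange_iota ?_ ?_ ?_
      · show Continuous fun q : WeakDual ℝ (Dual ℝ A) =>
          q (ext1 (ext1 (ContinuousLinearMap.mul ℝ A)) n (adjCLM D x''))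
        exact WeakDual.eval_continuous _
      · refine Continuous.add ?_ ?_
        · have h1 := hw x''
          have h2 : Continuous fun y : WeakSpace ℝ (Dual ℝ (Dual ℝ A)) =>
              (topDualPairing ℝ (Dual ℝ (Dual ℝ A))).flip y (G n) :=
            WeakBilin.eval_continuous _ _
          exact h2.comp h1
        · show Continuous fun q : WeakDual ℝ (Dual ℝ A) =>
            q (adjCLM D (fArens A n x''))
          exact WeakDual.eval_continuous _
      · rintro q ⟨a, rfl⟩
        show G (fArens A (inclusionInDoubleDual ℝ A a) n) x''
          = dualLeft2 A (inclusionInDoubleDual ℝ A a) (G n) x''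
            + dualRight2 A (G (inclusionInDoubleDual ℝ A a)) n x''
        rw [aux_step1 D hD a n]
        rfl
      done
    have := congrFun key (StrongDual.toWeakDual m)
    exact this
  obtain ⟨F, hF⟩ := hAm G step2
  refine ⟨adjCLM (inclusionInDoubleDual ℝ A) F, fun a => ?_⟩
  ext b
  have h := DFunLike.congr_fun (hF (inclusionInDoubleDual ℝ A a)) (inclusionInDoubleDual ℝ A b)
  simp only [ContinuousLinearMap.sub_apply] at h
  have e1 : dualLeft2 A (inclusionInDoubleDual ℝ A a) F (inclusionInDoubleDual ℝ A b)
      = F (inclusionInDoubleDual ℝ A (b * a)) := by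
    show F (fArens A (inclusionInDoubleDual ℝ A b) (inclusionInDoubleDual ℝ A a)) = _
    rw [aux_arens_iota]
  have e2 : dualRight2 A F (inclusionInDoubleDual ℝ A a) (inclusionInDoubleDual ℝ A b)
      = F (inclusionInDoubleDual ℝ A (a * b)) := by
    show F (fArens A (inclusionInDoubleDual ℝ A a) (inclusionInDoubleDual ℝ A b)) = _
    rw [aux_arens_iota]
  rw [e1, e2] at h
  exact h
end Main



section Statements
set_option maxHeartbeats 1000000
open Filter Topology ContinuousLinearMap NormedSpace

variable {A : Type*} [NonUnitalNormedRing A] [NormedSpace ℝ A]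
  [SMulCommClass ℝ A A] [IsScalarTower ℝ A A] [CompleteSpace A]

/-- If `A**` has the `I-w*w` property and `A**` is weakly amenable, then `A` is weakly
amenable. -/
theorem weaklyAmenable_of_bidual
    (hw : ∀ a'' : Dual ℝ (Dual ℝ A), WStarToWCont (fun b'' => fArens A a'' b''))
    (hAm : ∀ G : Dual ℝ (Dual ℝ A) →L[ℝ] Dual ℝ (Dual ℝ (Dual ℝ A)),
      IsDeriv (fArens A) (dualLeft2 A) (dualRight2 A) G →
      IsInner (dualLeft2 A) (dualRight2 A) G) :
    ∀ D : A →L[ℝ] Dual ℝ A,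
      IsDeriv (ContinuousLinearMap.mul ℝ A) (dualLeft A) (dualRight A) D →
      IsInner (dualLeft A) (dualRight A) D :=
  aux_main hw hAm

end Statements
end
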